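/- arXiv:2405.06177 — 2 statements merged into one kernel-verified Lean document; each statement's English description precedes it below -/
import Mathlib

section
/- Let n ≥ 3 and let S = {k, k+1, …, n-1} for some k with 2 ≤ k ≤ n-1. Then the maximum of d_H(σ,ρ) over all pairs of distinct permutations σ, ρ ∈ D(S;n) equals n-1. -/
/-- `σ` is a permutation of `[n] = {1,…,n}`, written in one-line notation:
`σ j` is the `j`-th entry, for `1 ≤ j ≤ n`. -/
def IsPermOn (n : ℕ) (σ : ℕ → ℕ) : Prop :=
  Set.BijOn σ (Set.Icc 1 n) (Set.Icc 1 n)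

/-- The descent set `D(σ) = {i ∈ [n-1] | σ_i > σ_{i+1}}`. -/
def DescentSet (n : ℕ) (σ : ℕ → ℕ) : Finset ℕ :=
  (Finset.Icc 1 (n - 1)).filter fun i => σ (i + 1) < σ i

/-- `D(S;n)`, the set of permutations of `[n]` with descent set `S`. -/
def DSn (n : ℕ) (S : Finset ℕ) : Set (ℕ → ℕ) :=
  {σ | IsPermOn n σ ∧ DescentSet n σ = S}

/-- The Hamming distance `d_H(σ,ρ) = |{i ∈ [n] : σ_i ≠ ρ_i}|`. -/
def dHamming (n : ℕ) (σ ρ : ℕ → ℕ) : ℕ :=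
  ((Finset.Icc 1 n).filter fun i => σ i ≠ ρ i).card

/-- The `ℓ∞` distance `d_ℓ(σ,ρ) = max_{1 ≤ i ≤ n} |σ_i − ρ_i|`. -/
def dLinf (n : ℕ) (σ ρ : ℕ → ℕ) : ℕ :=
  (Finset.Icc 1 n).sup fun i => ((σ i : ℤ) - (ρ i : ℤ)).natAbs

/-- `σ` and `ρ` are distinct as permutations of `[n]`
(they differ at some index of `[n]`). -/
def DistinctOn (n : ℕ) (σ ρ : ℕ → ℕ) : Prop :=
  ∃ i ∈ Set.Icc 1 n, σ i ≠ ρ i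

def sigA (n k j : ℕ) : ℕ := if j < k then j else n + k - j

def sigB (n k j : ℕ) : ℕ := if j < k then n - k + j else if j = k then n else n + 1 - j

lemma sigA_mem (n k : ℕ) (hn : 3 ≤ n) (hk1 : 2 ≤ k) (hk2 : k ≤ n - 1) :
    sigA n k ∈ DSn n (Finset.Icc k (n - 1)) := by
  refine ⟨⟨?_, ?_, ?_⟩, ?_⟩
  · intro j hj
    simp only [Set.mem_Icc] at *
    unfold sigA; split_ifs <;> omega
  · intro a ha b hb hab
    simp only [Set.mem_Icc] at ha hb
    unfold sigA at hab; split_ifs at hab <;> omega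
  · intro y hy
    simp only [Set.mem_Icc] at hy
    by_cases h1 : y < k
    · exact ⟨y, by simp [Set.mem_Icc]; omega, by unfold sigA; split_ifs <;> omega⟩
    · exact ⟨n + k - y, by simp [Set.mem_Icc]; omega, by unfold sigA; split_ifs <;> omega⟩
  · ext i
    simp only [DescentSet, Finset.mem_filter, Finset.mem_Icc]
    simp only [sigA]
    constructor
    · rintro ⟨h1, h2⟩; split_ifs at h2 <;> omega
    · rintro ⟨h1, h2⟩; refine ⟨by omega, ?_⟩; split_ifs <;> omega

lemma sigB_mem (n k : ℕ) (hn : 3 ≤ n) (hk1 : 2 ≤ k) (hk2 : k ≤ n - 1) :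
    sigB n k ∈ DSn n (Finset.Icc k (n - 1)) := by
  refine ⟨⟨?_, ?_, ?_⟩, ?_⟩
  · intro j hj
    simp only [Set.mem_Icc] at *
    unfold sigB; split_ifs <;> omega
  · intro a ha b hb hab
    simp only [Set.mem_Icc] at ha hb
    unfold sigB at hab; split_ifs at hab <;> omega
  · intro y hy
    simp only [Set.mem_Icc] at hy
    by_cases h1 : y = n
    · exact ⟨k, by simp [Set.mem_Icc]; omega, by unfold sigB; split_ifs <;> omega⟩
    by_cases h2 : n - k + 1 ≤ y
    · exact ⟨y + k - n, by simp [Set.mem_Icc]; omega, by unfold sigB; split_ifs <;> omega⟩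
    · exact ⟨n + 1 - y, by simp [Set.mem_Icc]; omega, by unfold sigB; split_ifs <;> omega⟩
  · ext i
    simp only [DescentSet, Finset.mem_filter, Finset.mem_Icc]
    simp only [sigB]
    constructor
    · rintro ⟨h1, h2⟩; split_ifs at h2 <;> omega
    · rintro ⟨h1, h2⟩; refine ⟨by omega, ?_⟩; split_ifs <;> omega

lemma val_at_k (n k : ℕ) (hn : 3 ≤ n) (hk1 : 2 ≤ k) (hk2 : k ≤ n - 1)
    (σ : ℕ → ℕ) (hσ : σ ∈ DSn n (Finset.Icc k (n - 1))) : σ k = n := by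
  obtain ⟨⟨hmap, hinj, hsurj⟩, hD⟩ := hσ
  have hlt : ∀ i, 1 ≤ i → i < k → σ i < σ (i + 1) := by
    intro i h1 h2
    have hi : i ∉ Finset.Icc k (n - 1) := by simp [Finset.mem_Icc]; omega
    rw [← hD] at hi
    simp only [DescentSet, Finset.mem_filter, Finset.mem_Icc, not_and, not_lt] at hi
    have hle : σ i ≤ σ (i + 1) := hi ⟨h1, by omega⟩
    have hne : σ i ≠ σ (i + 1) := by
      intro h
      have := hinj (by simp [Set.mem_Icc]; omega) (by simp [Set.mem_Icc]; omega) h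
      omega
    omega
  have hgt : ∀ i, k ≤ i → i ≤ n - 1 → σ (i + 1) < σ i := by
    intro i h1 h2
    have hi : i ∈ Finset.Icc k (n - 1) := by simp [Finset.mem_Icc]; omega
    rw [← hD] at hi
    simp only [DescentSet, Finset.mem_filter, Finset.mem_Icc] at hi
    exact hi.2
  have mono : ∀ b, b ≤ k → ∀ a, 1 ≤ a → a ≤ b → σ a ≤ σ b := by
    intro b
    induction b with
    | zero => intro _ a ha hab; exact absurd (ha.trans hab) (by omega)
    | succ b ih =>
      intro hbk a ha hab
      rcases Nat.lt_or_ge a (b + 1) with h | h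
      · have h1 : σ a ≤ σ b := ih (by omega) a ha (by omega)
        have h2 : σ b < σ (b + 1) := hlt b (by omega) (by omega)
        omega
      · have : a = b + 1 := by omega
        rw [this]
  have anti : ∀ b, b ≤ n → k ≤ b → σ b ≤ σ k := by
    intro b
    induction b with
    | zero => intro _ hkb; exact absurd (hk1.trans hkb) (by omega)
    | succ b ih =>
      intro hbn hkb
      rcases Nat.lt_or_ge k (b + 1) with h | h
      · have h1 : σ (b + 1) < σ b := hgt b (by omega) (by omega)
        have h2 : σ b ≤ σ k := ih (by omega) (by omega)
        omega
      · have : b + 1 = k := by omega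
        rw [this]
  obtain ⟨m, hm, hσm⟩ := hsurj (show n ∈ Set.Icc 1 n by simp [Set.mem_Icc]; omega)
  simp only [Set.mem_Icc] at hm
  have hσk : σ k ∈ Set.Icc 1 n := hmap (by simp [Set.mem_Icc]; omega)
  simp only [Set.mem_Icc] at hσk
  rcases Nat.lt_or_ge m k with h | h
  · have := mono k le_rfl m hm.1 (by omega)
    omega
  · have := anti m hm.2 h
    omega

/-- For `S = {k,…,n-1}` with `2 ≤ k ≤ n-1`, the maximum Hamming distance
over `D(S;n)` is `n-1`. -/
theorem stmt4 (n k : ℕ) (hn : 3 ≤ n) (hk1 : 2 ≤ k) (hk2 : k ≤ n - 1) :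
    IsGreatest {d : ℕ | ∃ σ ∈ DSn n (Finset.Icc k (n - 1)), ∃ ρ ∈ DSn n (Finset.Icc k (n - 1)),
      DistinctOn n σ ρ ∧ d = dHamming n σ ρ} (n - 1) := by
  constructor
  · refine ⟨sigA n k, sigA_mem n k hn hk1 hk2, sigB n k, sigB_mem n k hn hk1 hk2, ?_, ?_⟩
    · exact ⟨1, by simp [Set.mem_Icc]; omega, by unfold sigA sigB; split_ifs <;> omega⟩
    · unfold dHamming
      have : (Finset.Icc 1 n).filter (fun i => sigA n k i ≠ sigB n k i)
          = (Finset.Icc 1 n).erase k := by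
        ext j
        simp only [Finset.mem_filter, Finset.mem_erase, Finset.mem_Icc, ne_eq]
        constructor
        · rintro ⟨h1, h2⟩
          refine ⟨?_, h1⟩
          intro hjk; subst hjk
          apply h2; unfold sigA sigB; split_ifs <;> omega
        · rintro ⟨h1, h2⟩
          refine ⟨h2, ?_⟩
          unfold sigA sigB; split_ifs <;> omega
      rw [this, Finset.card_erase_of_mem (by simp [Finset.mem_Icc]; omega)]
      simp [Nat.card_Icc]
  · rintro d ⟨σ, hσ, ρ, hρ, hdist, rfl⟩
    have hσk := val_at_k n k hn hk1 hk2 σ hσ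
    have hρk := val_at_k n k hn hk1 hk2 ρ hρ
    unfold dHamming
    calc ((Finset.Icc 1 n).filter fun i => σ i ≠ ρ i).card
        ≤ ((Finset.Icc 1 n).erase k).card := by
          apply Finset.card_le_card
          intro j hj
          simp only [Finset.mem_filter, Finset.mem_Icc, ne_eq] at hj
          simp only [Finset.mem_erase, Finset.mem_Icc]
          refine ⟨?_, hj.1⟩
          intro hjk; subst hjk
          exact hj.2 (by omega)
      _ = n - 1 := by
          rw [Finset.card_erase_of_mem (by simp [Finset.mem_Icc]; omega)]
          simp [Nat.card_Icc]
end

section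
/- Let n ≥ 4 and let S = {k, k+1, …, n-2} for some k with 2 ≤ k ≤ n-2. Then there exist permutations σ, ρ ∈ D(S;n) with d_H(σ,ρ) = n, i.e., σ and ρ differ at every index. -/
def sigF (n k j : ℕ) : ℕ :=
  if j < k then j else if j ≤ n - 2 then n + k - j else if j = n - 1 then k else k + 1

def sigInv (n k v : ℕ) : ℕ :=
  if v < k then v else if v = k then n - 1 else if v = k + 1 then n else n + k - v

def rhoF (n k j : ℕ) : ℕ :=
  if j < k then j + 1 else if j ≤ n - 2 then n + k - 1 - j else if j = n - 1 then 1 else n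

def rhoInv (n k v : ℕ) : ℕ :=
  if v = 1 then n - 1 else if v ≤ k then v - 1 else if v ≤ n - 1 then n + k - 1 - v else n

/-- For `S = {k,…,n-2}` with `2 ≤ k ≤ n-2`, there exist
`σ, ρ ∈ D(S;n)` with `d_H(σ,ρ) = n`, i.e. differing at every index. -/
theorem stmt6 (n k : ℕ) (hn : 4 ≤ n) (hk1 : 2 ≤ k) (hk2 : k ≤ n - 2) :
    ∃ σ ∈ DSn n (Finset.Icc k (n - 2)), ∃ ρ ∈ DSn n (Finset.Icc k (n - 2)),
      dHamming n σ ρ = n := by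
  have hsb : IsPermOn n (sigF n k) := by
    apply Set.InvOn.bijOn (f' := sigInv n k)
    · constructor
      · intro x hx
        simp only [Set.mem_Icc] at hx
        simp only [sigF, sigInv]
        split_ifs <;> omega
      · intro x hx
        simp only [Set.mem_Icc] at hx
        simp only [sigF, sigInv]
        split_ifs <;> omega
    · intro x hx
      simp only [Set.mem_Icc] at *
      simp only [sigF]
      split_ifs <;> omega
    · intro x hx
      simp only [Set.mem_Icc] at *
      simp only [sigInv]
      split_ifs <;> omega
  have hrb : IsPermOn n (rhoF n k) := by
    apply Set.InvOn.bijOn (f' := rhoInv n k)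
    · constructor
      · intro x hx
        simp only [Set.mem_Icc] at hx
        simp only [rhoF, rhoInv]
        split_ifs <;> omega
      · intro x hx
        simp only [Set.mem_Icc] at hx
        simp only [rhoF, rhoInv]
        split_ifs <;> omega
    · intro x hx
      simp only [Set.mem_Icc] at *
      simp only [rhoF]
      split_ifs <;> omega
    · intro x hx
      simp only [Set.mem_Icc] at *
      simp only [rhoInv]
      split_ifs <;> omega
  have hsd : DescentSet n (sigF n k) = Finset.Icc k (n - 2) := by
    ext i
    simp only [DescentSet, Finset.mem_filter, Finset.mem_Icc]
    simp only [sigF]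
    split_ifs <;> omega
  have hrd : DescentSet n (rhoF n k) = Finset.Icc k (n - 2) := by
    ext i
    simp only [DescentSet, Finset.mem_filter, Finset.mem_Icc]
    simp only [rhoF]
    split_ifs <;> omega
  refine ⟨sigF n k, ⟨hsb, hsd⟩, rhoF n k, ⟨hrb, hrd⟩, ?_⟩
  unfold dHamming
  rw [Finset.filter_true_of_mem]
  · rw [Nat.card_Icc]; omega
  · intro i hi
    simp only [Finset.mem_Icc] at hi
    simp only [sigF, rhoF]
    split_ifs <;> omega
end
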